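/- Let R be a commutative ring and k, m, n natural numbers. Let R₁ be a k×k matrix, S₁ a k×m matrix, S₂ a k×n matrix, R₂ an m×m matrix, S an m×n matrix, T an n×m matrix and V an n×n matrix, all with entries in R, and assume that det V is a unit of R, so that V has an inverse matrix V⁻¹. Form the (k+m)×(k+m) block matrix A = fromBlocks R₁ S₁ 0 R₂, the (k+m)×n matrix B obtained by stacking S₂ above S, and the n×(k+m) matrix C obtained by placing the n×k zero matrix to the left of T. Then det(A − B·V⁻¹·C) · (det V)⁻¹ = det R₁ · ( det(R₂ − S·V⁻¹·T) · (det V)⁻¹ ); that is, the Berezinian of the block matrix [[R₁, S₁, S₂],[0, R₂, S],[0, T, V]] (with even-even block [[R₁, S₁],[0, R₂]] and odd-odd block V) equals det R₁ times the Berezinian of [[R₂, S],[T, V]]. -/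

import Mathlib

open Matrix

/-- Equation (6) of the paper: the Berezinian of the block matrix
`[[R₁, S₁, S₂], [0, R₂, S], [0, T, V]]` (with even-even block `[[R₁,S₁],[0,R₂]]`
and odd-odd block `V`, where `det V` is a unit) equals
`det R₁` times the Berezinian of `[[R₂, S], [T, V]]`. -/
theorem stmt4 {R : Type*} [CommRing R] {k m n : ℕ}
    (R₁ : Matrix (Fin k) (Fin k) R) (S₁ : Matrix (Fin k) (Fin m) R)
    (S₂ : Matrix (Fin k) (Fin n) R)
    (R₂ : Matrix (Fin m) (Fin m) R) (S : Matrix (Fin m) (Fin n) R)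
    (T : Matrix (Fin n) (Fin m) R) (V : Matrix (Fin n) (Fin n) R)
    (hV : IsUnit V.det) :
    (Matrix.fromBlocks R₁ S₁ 0 R₂ - Matrix.fromRows S₂ S * V⁻¹ * Matrix.fromCols 0 T).det
        * Ring.inverse V.det
      = R₁.det * ((R₂ - S * V⁻¹ * T).det * Ring.inverse V.det) := by
  have h : Matrix.fromRows S₂ S * V⁻¹ * Matrix.fromCols (0 : Matrix (Fin n) (Fin k) R) T
      = Matrix.fromBlocks (0 : Matrix (Fin k) (Fin k) R) (S₂ * V⁻¹ * T)
        (0 : Matrix (Fin m) (Fin k) R) (S * V⁻¹ * T) := by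
    rw [Matrix.fromRows_mul, Matrix.fromRows_mul_fromCols]
    simp [Matrix.mul_assoc]
  rw [h]
  have h2 : fromBlocks R₁ S₁ 0 R₂ - fromBlocks 0 (S₂ * V⁻¹ * T) 0 (S * V⁻¹ * T)
      = fromBlocks R₁ (S₁ - S₂ * V⁻¹ * T) 0 (R₂ - S * V⁻¹ * T) := by
    rw [sub_eq_add_neg, Matrix.fromBlocks_neg, Matrix.fromBlocks_add]
    simp [sub_eq_add_neg]
  rw [h2, Matrix.det_fromBlocks_zero₂₁]
  ring
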